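/- For an even set size i with 2 ≤ i ≤ n/2, the probability that a uniformly random perfect matching of [n] contains no edge between a fixed subset S of size i and its complement is at most (2i/(n+i))^{i/2}, and in particular at most (2/3)^{i/2}. -/

import Mathlib

open MeasureTheory

/-- A perfect matching of `Fin n`, encoded as a fixed-point-free involution. -/
def PerfectMatching (n : ℕ) : Type :=
  {σ : Equiv.Perm (Fin n) // (∀ i, σ (σ i) = i) ∧ ∀ i, σ i ≠ i}

instance (n : ℕ) : Fintype (PerfectMatching n) := by
  unfold PerfectMatching; infer_instance

instance (n : ℕ) : MeasurableSpace (PerfectMatching n) := ⊤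

/-- The uniform distribution on perfect matchings of `Fin n`. -/
noncomputable def uniformPM (n : ℕ) (h : Nonempty (PerfectMatching n)) :
    Measure (PerfectMatching n) :=
  (@PMF.uniformOfFintype (PerfectMatching n) _ h).toMeasure

section Aux

open Equiv

abbrev PMt (α : Type*) : Type _ :=
  {σ : Equiv.Perm α // (∀ i, σ (σ i) = i) ∧ ∀ i, σ i ≠ i}

def pmCongr {α β : Type*} (e : α ≃ β) : PMt α ≃ PMt β :=
  Equiv.subtypeEquiv e.permCongr (fun σ => by
    simp only [Equiv.permCongr_apply]
    constructor
    · rintro ⟨h1, h2⟩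
      refine ⟨fun b => by simp [h1], fun b hb => h2 (e.symm b) ?_⟩
      have := congrArg e.symm hb
      simpa using this
    · rintro ⟨h1, h2⟩
      refine ⟨fun a => ?_, fun a ha => ?_⟩
      · have := h1 (e a); simpa using this
      · exact h2 (e a) (by simpa using congrArg e ha))

variable {α : Type*} [DecidableEq α]

lemma pm_apply_eq_iff {σ : Equiv.Perm α} (hinv : ∀ i, σ (σ i) = i) {x y : α} :
    σ x = y ↔ x = σ y := by
  constructor
  · rintro rfl; exact (hinv x).symm
  · rintro rfl; exact hinv y

/-- Reconstruction: extend a matching of the complement of `{a,b}` by the pair `(a,b)`. -/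
def pmExtPerm (a b : α) (τ : Equiv.Perm {x : α // x ≠ a ∧ x ≠ b}) : Equiv.Perm α :=
  Equiv.swap a b * Equiv.Perm.ofSubtype τ

lemma pmExtPerm_apply_a (a b : α) (hab : b ≠ a) (τ : Equiv.Perm {x : α // x ≠ a ∧ x ≠ b}) :
    pmExtPerm a b τ a = b := by
  have h1 : Equiv.Perm.ofSubtype τ a = a :=
    Equiv.Perm.ofSubtype_apply_of_not_mem τ (by simp)
  simp [pmExtPerm, h1, Equiv.swap_apply_left]

lemma pmExtPerm_apply_b (a b : α) (hab : b ≠ a) (τ : Equiv.Perm {x : α // x ≠ a ∧ x ≠ b}) :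
    pmExtPerm a b τ b = a := by
  have h1 : Equiv.Perm.ofSubtype τ b = b :=
    Equiv.Perm.ofSubtype_apply_of_not_mem τ (by simp)
  simp [pmExtPerm, h1, Equiv.swap_apply_right]

lemma pmExtPerm_apply_mem (a b : α) (τ : Equiv.Perm {x : α // x ≠ a ∧ x ≠ b})
    {x : α} (hx : x ≠ a ∧ x ≠ b) :
    pmExtPerm a b τ x = (τ ⟨x, hx⟩ : α) := by
  have h1 : Equiv.Perm.ofSubtype τ x = (τ ⟨x, hx⟩ : α) :=
    Equiv.Perm.ofSubtype_apply_of_mem τ hx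
  have hy := (τ ⟨x, hx⟩).2
  simp [pmExtPerm, h1, Equiv.swap_apply_of_ne_of_ne hy.1 hy.2]

lemma pmExtend_coe (a b : α) (hab : b ≠ a) (τ : PMt {x : α // x ≠ a ∧ x ≠ b}) :
    True := trivial

def pmExtend (a b : α) (hab : b ≠ a) (τ : PMt {x : α // x ≠ a ∧ x ≠ b}) : PMt α := by
  refine ⟨pmExtPerm a b τ.1, ?_, ?_⟩
  · intro x
    by_cases hxa : x = a
    · rw [hxa, pmExtPerm_apply_a a b hab, pmExtPerm_apply_b a b hab]
    · by_cases hxb : x = b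
      · rw [hxb, pmExtPerm_apply_b a b hab, pmExtPerm_apply_a a b hab]
      · have hx : x ≠ a ∧ x ≠ b := ⟨hxa, hxb⟩
        rw [pmExtPerm_apply_mem a b τ.1 hx,
          pmExtPerm_apply_mem a b τ.1 (τ.1 ⟨x, hx⟩).2]
        simp [τ.2.1]
  · intro x
    by_cases hxa : x = a
    · rw [hxa, pmExtPerm_apply_a a b hab]; exact fun h => hab h
    · by_cases hxb : x = b
      · rw [hxb, pmExtPerm_apply_b a b hab]; exact fun h => hab h.symm
      · have hx : x ≠ a ∧ x ≠ b := ⟨hxa, hxb⟩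
        rw [pmExtPerm_apply_mem a b τ.1 hx]
        exact fun h => τ.2.2 ⟨x, hx⟩ (Subtype.ext h)

lemma pm_restrict_iff (a b : α) (σ : PMt α) (hσ : σ.1 a = b) :
    ∀ x : α, (x ≠ a ∧ x ≠ b) ↔ (σ.1 x ≠ a ∧ σ.1 x ≠ b) := by
  intro x
  have h1 : σ.1 x = a ↔ x = b := by
    rw [pm_apply_eq_iff σ.2.1, hσ]
  have h2 : σ.1 x = b ↔ x = a := by
    rw [← hσ, σ.1.apply_eq_iff_eq]
  constructor
  · rintro ⟨ha, hb⟩; exact ⟨fun h => hb (h1.1 h), fun h => ha (h2.1 h)⟩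
  · rintro ⟨ha, hb⟩; exact ⟨fun h => hb (h2.2 h), fun h => ha (h1.2 h)⟩

/-- Matchings sending `a` to `b` correspond to matchings of the complement of `{a,b}`. -/
def pmFiberEquiv (a b : α) (hab : b ≠ a) :
    {σ : PMt α // σ.1 a = b} ≃ PMt {x : α // x ≠ a ∧ x ≠ b} where
  toFun σ := ⟨σ.1.1.subtypePerm (fun x => (pm_restrict_iff a b σ.1 σ.2 x).symm),
    fun x => Subtype.ext (σ.1.2.1 x.1), fun x h => σ.1.2.2 x.1 (congrArg Subtype.val h)⟩
  invFun τ := ⟨pmExtend a b hab τ, pmExtPerm_apply_a a b hab τ.1⟩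
  left_inv := by
    rintro ⟨σ, hσ⟩
    apply Subtype.ext; apply Subtype.ext; apply Equiv.ext
    intro x
    by_cases hxa : x = a
    · rw [hxa]; rw [show (pmExtend a b hab _ : PMt α).1 a = b from
        pmExtPerm_apply_a a b hab _, hσ]
    · by_cases hxb : x = b
      · rw [hxb, show (pmExtend a b hab _ : PMt α).1 b = a from
          pmExtPerm_apply_b a b hab _]
        have hba : σ.1 b = a := by rw [← hσ]; exact σ.2.1 a
        exact hba.symm
      · exact pmExtPerm_apply_mem a b _ ⟨hxa, hxb⟩
  right_inv := by
    intro τ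
    apply Subtype.ext; apply Equiv.ext
    intro x
    apply Subtype.ext
    show (pmExtend a b hab τ).1 x.1 = (τ.1 x : α)
    rw [show (pmExtend a b hab τ).1 = pmExtPerm a b τ.1 from rfl,
      pmExtPerm_apply_mem a b τ.1 x.2]

/-- The number of perfect matchings of `Fin n`. -/
noncomputable def Mcnt (n : ℕ) : ℕ := Nat.card (PMt (Fin n))

lemma card_PMt (α : Type*) [Fintype α] [DecidableEq α] :
    Nat.card (PMt α) = Mcnt (Fintype.card α) :=
  Nat.card_congr (pmCongr (Fintype.equivFin α))

lemma card_compl_pair (α : Type*) [Fintype α] [DecidableEq α] (a b : α) (hab : b ≠ a) :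
    Fintype.card {x : α // x ≠ a ∧ x ≠ b} = Fintype.card α - 2 := by
  have e : {x : α // x ≠ a ∧ x ≠ b} ≃ {x : α // ¬ x ∈ ({a, b} : Finset α)} :=
    Equiv.subtypeEquivRight (by intro x; simp [not_or])
  rw [Fintype.card_congr e, Fintype.card_subtype_compl]
  congr 1
  have h2 : Fintype.card {x : α // x ∈ ({a, b} : Finset α)} = ({a, b} : Finset α).card :=
    Fintype.card_coe _
  rw [h2, Finset.card_insert_of_notMem (by simpa using fun h => hab h.symm),
    Finset.card_singleton]

lemma card_PMt_rec (α : Type*) [Fintype α] [DecidableEq α] (a : α) :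
    Nat.card (PMt α) = (Fintype.card α - 1) * Mcnt (Fintype.card α - 2) := by
  classical
  have hcard : ∀ b : α, b ≠ a → Nat.card {σ : PMt α // σ.1 a = b}
      = Mcnt (Fintype.card α - 2) := by
    intro b hb
    rw [Nat.card_congr (pmFiberEquiv a b hb), card_PMt, card_compl_pair α a b hb]
  have key : Nat.card (PMt α)
      = ∑ b ∈ Finset.univ.erase a, Nat.card {σ : PMt α // σ.1 a = b} := by
    rw [Nat.card_eq_fintype_card, ← Finset.card_univ,
      Finset.card_eq_sum_card_fiberwise (f := fun σ : PMt α => σ.1 a)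
      (t := Finset.univ.erase a) (fun σ _ => Finset.mem_erase.2 ⟨σ.2.2 a, Finset.mem_univ _⟩)]
    refine Finset.sum_congr rfl (fun b _ => ?_)
    rw [Nat.card_eq_fintype_card]
    exact (Fintype.card_subtype _).symm
  rw [key, Finset.sum_congr rfl (fun b hb => hcard b (Finset.mem_erase.1 hb).1),
    Finset.sum_const, Finset.card_erase_of_mem (Finset.mem_univ a), Finset.card_univ,
    smul_eq_mul]

lemma Mcnt_succ (m : ℕ) : Mcnt (m + 2) = (m + 1) * Mcnt m := by
  show Nat.card (PMt (Fin (m + 2))) = _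
  rw [card_PMt_rec (Fin (m + 2)) 0, Fintype.card_fin]
  norm_num

lemma Mcnt_zero : Mcnt 0 = 1 := by
  rw [Mcnt, Nat.card_eq_fintype_card, Fintype.card_eq_one_iff]
  refine ⟨⟨1, fun i => i.elim0, fun i => i.elim0⟩, fun σ => ?_⟩
  apply Subtype.ext; apply Equiv.ext; intro x; exact x.elim0

section split
variable {α : Type*} [Fintype α] [DecidableEq α] (S : Finset α)

def pmGluePerm (τ : Equiv.Perm {x : α // x ∈ S}) (ρ : Equiv.Perm {x : α // ¬ x ∈ S}) :
    Equiv.Perm α :=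
  Equiv.Perm.ofSubtype τ * Equiv.Perm.ofSubtype ρ

lemma pmGluePerm_apply_mem (τ : Equiv.Perm {x : α // x ∈ S}) (ρ : Equiv.Perm {x : α // ¬ x ∈ S})
    {x : α} (hx : x ∈ S) : pmGluePerm S τ ρ x = (τ ⟨x, hx⟩ : α) := by
  have h1 : Equiv.Perm.ofSubtype ρ x = x :=
    Equiv.Perm.ofSubtype_apply_of_not_mem ρ (by simpa using hx)
  have h2 : Equiv.Perm.ofSubtype τ x = (τ ⟨x, hx⟩ : α) :=
    Equiv.Perm.ofSubtype_apply_of_mem τ hx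
  simp [pmGluePerm, h1, h2]

lemma pmGluePerm_apply_not_mem (τ : Equiv.Perm {x : α // x ∈ S})
    (ρ : Equiv.Perm {x : α // ¬ x ∈ S}) {x : α} (hx : ¬ x ∈ S) :
    pmGluePerm S τ ρ x = (ρ ⟨x, hx⟩ : α) := by
  have h1 : Equiv.Perm.ofSubtype ρ x = (ρ ⟨x, hx⟩ : α) :=
    Equiv.Perm.ofSubtype_apply_of_mem ρ hx
  have h2 : Equiv.Perm.ofSubtype τ (ρ ⟨x, hx⟩ : α) = (ρ ⟨x, hx⟩ : α) :=
    Equiv.Perm.ofSubtype_apply_of_not_mem τ (ρ ⟨x, hx⟩).2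
  simp [pmGluePerm, h1, h2]

lemma pm_mem_iff (σ : PMt α) (hS : ∀ a ∈ S, σ.1 a ∈ S) :
    ∀ x : α, x ∈ S ↔ σ.1 x ∈ S := by
  intro x
  refine ⟨fun hx => hS x hx, fun hx => ?_⟩
  have := hS _ hx
  rwa [σ.2.1 x] at this

/-- Matchings keeping `S` internally matched split as a matching of `S`
and a matching of its complement. -/
def pmSplitEquiv : {σ : PMt α // ∀ a ∈ S, σ.1 a ∈ S}
    ≃ PMt {x : α // x ∈ S} × PMt {x : α // ¬ x ∈ S} where
  toFun σ :=
    (⟨σ.1.1.subtypePerm (fun x => (pm_mem_iff S σ.1 σ.2 x).symm),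
      fun x => Subtype.ext (σ.1.2.1 x.1), fun x h => σ.1.2.2 x.1 (congrArg Subtype.val h)⟩,
     ⟨σ.1.1.subtypePerm (fun x => not_congr (pm_mem_iff S σ.1 σ.2 x).symm),
      fun x => Subtype.ext (σ.1.2.1 x.1), fun x h => σ.1.2.2 x.1 (congrArg Subtype.val h)⟩)
  invFun p := by
    refine ⟨⟨pmGluePerm S p.1.1 p.2.1, ?_, ?_⟩, ?_⟩
    · intro x
      by_cases hx : x ∈ S
      · rw [pmGluePerm_apply_mem S _ _ hx,
          pmGluePerm_apply_mem S _ _ (p.1.1 ⟨x, hx⟩).2]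
        simp [p.1.2.1]
      · rw [pmGluePerm_apply_not_mem S _ _ hx,
          pmGluePerm_apply_not_mem S _ _ (p.2.1 ⟨x, hx⟩).2]
        simp [p.2.2.1]
    · intro x
      by_cases hx : x ∈ S
      · rw [pmGluePerm_apply_mem S _ _ hx]
        exact fun h => p.1.2.2 ⟨x, hx⟩ (Subtype.ext h)
      · rw [pmGluePerm_apply_not_mem S _ _ hx]
        exact fun h => p.2.2.2 ⟨x, hx⟩ (Subtype.ext h)
    · intro a ha
      rw [pmGluePerm_apply_mem S _ _ ha]
      exact (p.1.1 ⟨a, ha⟩).2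
  left_inv := by
    rintro ⟨σ, hσ⟩
    apply Subtype.ext; apply Subtype.ext; apply Equiv.ext
    intro x
    by_cases hx : x ∈ S
    · exact pmGluePerm_apply_mem S _ _ hx
    · exact pmGluePerm_apply_not_mem S _ _ hx
  right_inv := by
    rintro ⟨τ, ρ⟩
    refine Prod.ext ?_ ?_
    · apply Subtype.ext; apply Equiv.ext; intro x; apply Subtype.ext
      show pmGluePerm S τ.1 ρ.1 x.1 = (τ.1 x : α)
      rw [pmGluePerm_apply_mem S _ _ x.2]
    · apply Subtype.ext; apply Equiv.ext; intro x; apply Subtype.ext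
      show pmGluePerm S τ.1 ρ.1 x.1 = (ρ.1 x : α)
      rw [pmGluePerm_apply_not_mem S _ _ x.2]

lemma card_event : Nat.card {σ : PMt α // ∀ a ∈ S, σ.1 a ∈ S}
    = Mcnt S.card * Mcnt (Fintype.card α - S.card) := by
  rw [Nat.card_congr (pmSplitEquiv S), Nat.card_prod, card_PMt, card_PMt]
  congr 2
  · exact Fintype.card_coe S
  · rw [Fintype.card_subtype_compl, Fintype.card_coe]

end split

lemma Mcnt_prod (m n : ℕ) (h : 2 * m ≤ n) :
    Mcnt n = (∏ k ∈ Finset.range m, (n - 1 - 2 * k)) * Mcnt (n - 2 * m) := by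
  induction m with
  | zero => simp
  | succ m ih =>
    have h' : 2 * m ≤ n := by omega
    have h1 : n - 2 * m = (n - 2 * (m + 1)) + 2 := by omega
    have h2 : n - 2 * (m + 1) + 1 = n - 1 - 2 * m := by omega
    rw [ih h', h1, Mcnt_succ, h2, Finset.prod_range_succ]
    ring

lemma ratio_le (n i k : ℕ) (hk2 : 2 * k + 2 ≤ i) (hin : 2 * i ≤ n) :
    ((i - 1 - 2 * k : ℕ) : ℝ) / ((n - 1 - 2 * k : ℕ) : ℝ) ≤ 2 * i / ((n : ℝ) + i) := by
  have hc1 : ((i - 1 - 2 * k : ℕ) : ℝ) = (i : ℝ) - 1 - 2 * k := by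
    have : (1 + 2 * k : ℕ) ≤ i := by omega
    rw [Nat.sub_sub, Nat.cast_sub this]
    push_cast; ring
  have hc2 : ((n - 1 - 2 * k : ℕ) : ℝ) = (n : ℝ) - 1 - 2 * k := by
    have : (1 + 2 * k : ℕ) ≤ n := by omega
    rw [Nat.sub_sub, Nat.cast_sub this]
    push_cast; ring
  have hin' : (i : ℝ) ≤ n := by exact_mod_cast le_trans (by omega) hin
  have hkpos : (0 : ℝ) < (n : ℝ) - 1 - 2 * k := by
    have : (2 * k + 2 : ℕ) ≤ n := by omega
    have := (Nat.cast_le (α := ℝ)).2 this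
    push_cast at this
    linarith
  have hnpos : (0 : ℝ) < (n : ℝ) + i := by
    have h0 : (0:ℝ) < n := by
      have : (1:ℕ) ≤ n := by omega
      exact_mod_cast Nat.lt_of_lt_of_le Nat.zero_lt_one this
    have h1 : (0:ℝ) ≤ i := Nat.cast_nonneg i
    linarith
  rw [hc1, hc2, div_le_div_iff₀ hkpos hnpos]
  have hk : (0 : ℝ) ≤ (k : ℕ) := Nat.cast_nonneg k
  nlinarith [Nat.cast_nonneg (α := ℝ) i, Nat.cast_nonneg (α := ℝ) k]

end Aux

/-- For an even set size `i` with `2 ≤ i ≤ n/2`, the probability that a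
uniformly random perfect matching of `[n]` has no edge between a fixed subset `S` of size `i`
and its complement (i.e. `S` is internally matched) is at most `(2i/(n+i))^{i/2}`, and in
particular at most `(2/3)^{i/2}`. -/
theorem matching_isolates_subset_prob (n i : ℕ) (h : Nonempty (PerfectMatching n))
    (S : Finset (Fin n)) (hcard : S.card = i) (h2 : 2 ≤ i) (hev : Even i)
    (hhalf : 2 * i ≤ n) :
    ((uniformPM n h) {σ : PerfectMatching n | ∀ a ∈ S, σ.1 a ∈ S}).toReal
        ≤ (2 * (i : ℝ) / ((n : ℝ) + i)) ^ ((i : ℝ) / 2) ∧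
      ((uniformPM n h) {σ : PerfectMatching n | ∀ a ∈ S, σ.1 a ∈ S}).toReal
        ≤ ((2 : ℝ) / 3) ^ ((i : ℝ) / 2) := by
  classical
  obtain ⟨m, hm⟩ := hev
  have him : i = 2 * m := by omega
  have hh : Nonempty (PMt (Fin n)) := h
  have hposn : 0 < Mcnt n := Nat.card_pos
  -- count of the event
  have hnum : Nat.card {σ : PerfectMatching n | ∀ a ∈ S, σ.1 a ∈ S}
      = Mcnt i * Mcnt (n - i) := by
    have e : ({σ : PerfectMatching n | ∀ a ∈ S, σ.1 a ∈ S} : Set (PerfectMatching n))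
        ≃ {σ : PMt (Fin n) // ∀ a ∈ S, σ.1 a ∈ S} := Equiv.cast rfl
    rw [Nat.card_congr e, card_event S, hcard, Fintype.card_fin]
  have hden : Nat.card (PerfectMatching n) = Mcnt n := Nat.card_congr (Equiv.cast rfl)
  -- measure as a ratio of counts
  have hmeas : ((uniformPM n h) {σ : PerfectMatching n | ∀ a ∈ S, σ.1 a ∈ S}).toReal
      = (Mcnt i * Mcnt (n - i) : ℝ) / (Mcnt n : ℝ) := by
    have hs : MeasurableSet {σ : PerfectMatching n | ∀ a ∈ S, σ.1 a ∈ S} :=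
      MeasurableSpace.measurableSet_top
    rw [uniformPM, PMF.toMeasure_uniformOfFintype_apply _ hs, ENNReal.toReal_div]
    simp only [ENNReal.toReal_natCast, ← Nat.card_eq_fintype_card]
    rw [hnum, hden]
    push_cast
    rfl
  -- product formulas
  have hfac : Mcnt n = (∏ k ∈ Finset.range m, (n - 1 - 2 * k)) * Mcnt (n - 2 * m) :=
    Mcnt_prod m n (by omega)
  have hIcnt : Mcnt i = ∏ k ∈ Finset.range m, (i - 1 - 2 * k) := by
    have h0 : i - 2 * m = 0 := by omega
    rw [Mcnt_prod m i (by omega), h0, Mcnt_zero, mul_one]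
  have hrest_pos : 0 < Mcnt (n - 2 * m) := by
    have h1 : 0 < (∏ k ∈ Finset.range m, (n - 1 - 2 * k)) * Mcnt (n - 2 * m) :=
      hfac ▸ hposn
    exact Nat.pos_of_ne_zero fun h0 => by simp [h0] at h1
  -- express probability as a product of ratios
  have hP : (Mcnt i * Mcnt (n - i) : ℝ) / (Mcnt n : ℝ)
      = ∏ k ∈ Finset.range m, (((i - 1 - 2 * k : ℕ) : ℝ) / ((n - 1 - 2 * k : ℕ) : ℝ)) := by
    rw [hIcnt, show n - i = n - 2 * m by omega, hfac]
    push_cast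
    rw [mul_div_mul_right _ _ (by exact_mod_cast hrest_pos.ne' : (Mcnt (n - 2 * m) : ℝ) ≠ 0),
      ← Finset.prod_div_distrib]
  -- bound each factor
  have hbound : ∀ k ∈ Finset.range m,
      ((i - 1 - 2 * k : ℕ) : ℝ) / ((n - 1 - 2 * k : ℕ) : ℝ) ≤ 2 * (i : ℝ) / ((n : ℝ) + i) := by
    intro k hk
    exact ratio_le n i k (by have := Finset.mem_range.1 hk; omega) hhalf
  have hprod_le : ∏ k ∈ Finset.range m, (((i - 1 - 2 * k : ℕ) : ℝ) / ((n - 1 - 2 * k : ℕ) : ℝ))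
      ≤ (2 * (i : ℝ) / ((n : ℝ) + i)) ^ m := by
    calc ∏ k ∈ Finset.range m, (((i - 1 - 2 * k : ℕ) : ℝ) / ((n - 1 - 2 * k : ℕ) : ℝ))
        ≤ ∏ _k ∈ Finset.range m, (2 * (i : ℝ) / ((n : ℝ) + i)) :=
          Finset.prod_le_prod (fun k _ => by positivity) hbound
      _ = (2 * (i : ℝ) / ((n : ℝ) + i)) ^ m := by
          rw [Finset.prod_const, Finset.card_range]
  have hexp : ((i : ℝ) / 2) = (m : ℕ) := by rw [him]; push_cast; ring
  have hbase_nonneg : (0 : ℝ) ≤ 2 * (i : ℝ) / ((n : ℝ) + i) := by positivity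
  have hfirst : ((uniformPM n h) {σ : PerfectMatching n | ∀ a ∈ S, σ.1 a ∈ S}).toReal
      ≤ (2 * (i : ℝ) / ((n : ℝ) + i)) ^ ((i : ℝ) / 2) := by
    rw [hmeas, hP, hexp, Real.rpow_natCast]
    exact hprod_le
  refine ⟨hfirst, ?_⟩
  have hbases : 2 * (i : ℝ) / ((n : ℝ) + i) ≤ 2 / 3 := by
    have hipos : (0 : ℝ) < i := by exact_mod_cast (by omega : 0 < i)
    have hni : (0 : ℝ) < (n : ℝ) + i := by
      have : (0:ℝ) ≤ n := Nat.cast_nonneg n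
      linarith
    rw [div_le_div_iff₀ hni (by norm_num)]
    have hn2i : (2 * i : ℝ) ≤ n := by exact_mod_cast hhalf
    nlinarith
  calc ((uniformPM n h) {σ : PerfectMatching n | ∀ a ∈ S, σ.1 a ∈ S}).toReal
      ≤ (2 * (i : ℝ) / ((n : ℝ) + i)) ^ ((i : ℝ) / 2) := hfirst
    _ ≤ ((2 : ℝ) / 3) ^ ((i : ℝ) / 2) := by
        rw [hexp, Real.rpow_natCast, Real.rpow_natCast]
        exact pow_le_pow_left₀ hbase_nonneg hbases m
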